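/- Let P = Σ_{j=0}^d a_j x^j be a real polynomial of degree d all of whose coefficients a_0, …, a_d are nonzero. Let c be the number of indices j with 1 ≤ j ≤ d and a_j·a_{j−1} < 0 (sign changes), and let pos be the number of positive real roots of P counted with multiplicity. Then pos ≤ c and c − pos is an even integer. -/

import Mathlib

open Polynomial

set_option linter.unreachableTactic false
set_option linter.unusedTactic false


private lemma sum_map_ite (M : Multiset ℝ) (x : ℝ) :
    (M.map fun r => if x = r then 1 else 0).sum = M.count x := by
  classical
  induction M using Multiset.induction_on with
  | empty => simp
  | cons a s ih =>
    by_cases h : x = a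
    · subst h; simp [ih, Multiset.count_cons]; omega
    · simp [h, ih, Multiset.count_cons]

private lemma comp_sq_ne_zero {p : ℝ[X]} (hp : p ≠ 0) : p.comp (X ^ 2) ≠ 0 := by
  have h : (p.comp ((X : ℝ[X]) ^ 2)).leadingCoeff ≠ 0 := by
    rw [leadingCoeff_comp (by simp)]
    simp [leadingCoeff_X_pow, hp]
  exact fun h0 => h (by simp [h0])

private lemma rm_comp_sq {p : ℝ[X]} (hp : p ≠ 0) {s : ℝ} (hs : s ≠ 0) :
    rootMultiplicity s (p.comp (X ^ 2)) = rootMultiplicity (s * s) p := by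
  set m := rootMultiplicity (s * s) p with hm
  set q := p /ₘ (X - C (s * s)) ^ m with hqdef
  have h1 : (X - C (s * s)) ^ m * q = p := pow_mul_divByMonic_rootMultiplicity_eq p (s * s)
  have h2 : q.eval (s * s) ≠ 0 := eval_divByMonic_pow_rootMultiplicity_ne_zero (s * s) hp
  have hfac : p.comp (X ^ 2) = (X - C s) ^ m * ((X + C s) ^ m * q.comp (X ^ 2)) := by
    have key : ((X : ℝ[X]) ^ 2 - C (s * s)) = (X - C s) * (X + C s) := by
      rw [C_mul]; ring
    conv_lhs => rw [← h1]
    rw [mul_comp, pow_comp, sub_comp, X_comp, C_comp, key, mul_pow]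
    ring
  have hne : (X - C s) ^ m * ((X + C s) ^ m * q.comp (X ^ 2)) ≠ 0 :=
    hfac ▸ comp_sq_ne_zero hp
  have hnr : ¬ IsRoot ((X + C s) ^ m * q.comp (X ^ 2)) s := by
    simp only [IsRoot, eval_mul, eval_pow, eval_add, eval_X, eval_C, eval_comp]
    refine mul_ne_zero (pow_ne_zero _ (by intro h; apply hs; linarith)) ?_
    rw [pow_two]
    exact h2
  rw [hfac, rootMultiplicity_mul hne, rootMultiplicity_X_sub_C_pow,
    rootMultiplicity_eq_zero hnr, add_zero]

private lemma roots_comp_sq {p : ℝ[X]} (h0 : p.coeff 0 ≠ 0) :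
    (p.comp (X ^ 2)).roots =
      (p.roots.filter (fun x => 0 < x)).bind (fun r => {Real.sqrt r, -Real.sqrt r}) := by
  classical
  have hp : p ≠ 0 := fun h => h0 (by simp [h])
  ext s
  rw [Multiset.count_bind, count_roots]
  by_cases hs : s = 0
  · subst hs
    rw [rootMultiplicity_eq_zero (by
      simp only [IsRoot, eval_comp, eval_pow, eval_X]
      rw [show (0:ℝ) ^ 2 = 0 by norm_num, ← coeff_zero_eq_eval_zero]
      exact h0)]
    symm
    apply Multiset.sum_eq_zero
    intro x hx
    obtain ⟨r, hr, rfl⟩ := Multiset.mem_map.mp hx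
    have hrpos : 0 < r := (Multiset.mem_filter.mp hr).2
    have h1 : Real.sqrt r ≠ 0 := ne_of_gt (Real.sqrt_pos.mpr hrpos)
    rw [Multiset.count_eq_zero]
    simp only [Multiset.insert_eq_cons, Multiset.mem_cons, Multiset.mem_singleton]
    push_neg
    constructor
    · exact fun h => h1 h.symm
    · intro h; apply h1; linarith [h.symm]
  · rw [rm_comp_sq hp hs]
    have hmapeq : (p.roots.filter (fun x => 0 < x)).map
          (fun r => Multiset.count s ({Real.sqrt r, -Real.sqrt r} : Multiset ℝ))
        = (p.roots.filter (fun x => 0 < x)).map (fun r => if s * s = r then 1 else 0) := by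
      apply Multiset.map_congr rfl
      intro r hr
      have hrpos : 0 < r := (Multiset.mem_filter.mp hr).2
      have hsq : Real.sqrt r * Real.sqrt r = r := Real.mul_self_sqrt hrpos.le
      have hsqpos : 0 < Real.sqrt r := Real.sqrt_pos.mpr hrpos
      by_cases h : s * s = r
      · have habs : s = Real.sqrt r ∨ s = -Real.sqrt r := by
          have : (s - Real.sqrt r) * (s + Real.sqrt r) = 0 := by nlinarith
          rcases mul_eq_zero.mp this with h' | h'
          · left; linarith
          · right; linarith
        rw [if_pos h]
        rcases habs with rfl | rfl
        · rw [show ({Real.sqrt r, -Real.sqrt r} : Multiset ℝ)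
              = Real.sqrt r ::ₘ {-Real.sqrt r} from rfl]
          rw [Multiset.count_cons_self, Multiset.count_singleton, if_neg (by linarith)]
        · rw [show ({Real.sqrt r, -Real.sqrt r} : Multiset ℝ)
              = Real.sqrt r ::ₘ {-Real.sqrt r} from rfl]
          rw [Multiset.count_cons_of_ne (by intro hh; nlinarith [hh]), Multiset.count_singleton,
            if_pos rfl]
      · rw [if_neg h, Multiset.count_eq_zero]
        simp only [Multiset.insert_eq_cons, Multiset.mem_cons, Multiset.mem_singleton]
        push_neg
        constructor
        · intro hh; exact h (by rw [hh, hsq])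
        · intro hh; exact h (by rw [hh]; nlinarith)
    rw [hmapeq, sum_map_ite, Multiset.count_filter,
      if_pos (mul_self_pos.mpr hs), count_roots]

private lemma card_roots_comp_sq {p : ℝ[X]} (h0 : p.coeff 0 ≠ 0) :
    Multiset.card (p.comp (X ^ 2)).roots
      = 2 * (p.roots.filter (fun x => 0 < x)).card := by
  rw [roots_comp_sq h0, Multiset.card_bind]
  rw [show (Multiset.card ∘ fun r => ({Real.sqrt r, -Real.sqrt r} : Multiset ℝ))
      = fun _ => (2 : ℕ) from funext fun r => rfl]
  rw [Multiset.map_const', Multiset.sum_replicate, smul_eq_mul, mul_comm]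

private lemma pos_roots_le_derivative {p : ℝ[X]} (h0 : p.coeff 0 ≠ 0) (h1 : p.coeff 1 ≠ 0) :
    (p.roots.filter (fun x => 0 < x)).card
      ≤ ((derivative p).roots.filter (fun x => 0 < x)).card + 1 := by
  have hp : p ≠ 0 := fun h => h0 (by simp [h])
  have hd0 : (derivative p).coeff 0 ≠ 0 := by
    rw [coeff_derivative]
    simpa using h1
  have hd : derivative p ≠ 0 := fun h => hd0 (by simp [h])
  have key := card_roots_le_derivative (p.comp (X ^ 2))
  rw [card_roots_comp_sq h0] at key
  have hder : derivative (p.comp (X ^ 2)) = C 2 * (X * ((derivative p).comp (X ^ 2))) := by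
    rw [derivative_comp, derivative_X_pow]
    push_cast
    ring
  rw [hder, roots_C_mul _ (two_ne_zero),
    roots_mul (mul_ne_zero X_ne_zero (comp_sq_ne_zero hd)), roots_X] at key
  simp only [Multiset.card_add, Multiset.card_singleton] at key
  rw [card_roots_comp_sq hd0] at key
  omega

private lemma eval_sign_const {Q : ℝ[X]} (h : ∀ x, Q.eval x ≠ 0) {a b : ℝ}
    (ha : Q.eval a < 0) : Q.eval b < 0 := by
  rcases (h b).lt_or_gt with hb | hb
  · exact hb
  · exfalso
    rcases le_total a b with hab | hab
    · obtain ⟨x, -, hx⟩ := intermediate_value_Icc hab Q.continuousOn ⟨ha.le, hb.le⟩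
      exact h x hx
    · obtain ⟨x, -, hx⟩ := intermediate_value_Icc' hab Q.continuousOn ⟨ha.le, hb.le⟩
      exact h x hx

private lemma eval_mul_eval_pos {Q : ℝ[X]} (h : ∀ x, Q.eval x ≠ 0) (a b : ℝ) :
    0 < Q.eval a * Q.eval b := by
  rcases (h a).lt_or_gt with ha | ha
  · exact mul_pos_of_neg_of_neg ha (eval_sign_const h ha)
  · rcases (h b).lt_or_gt with hb | hb
    · exact absurd ha (not_lt.mpr (eval_sign_const h hb).le)
    · exact mul_pos ha hb

private lemma eval_zero_mul_leading_pos {Q : ℝ[X]} (h : ∀ x, Q.eval x ≠ 0) :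
    0 < Q.eval 0 * Q.leadingCoeff := by
  have hQ0 : Q ≠ 0 := fun hh => h 0 (by simp [hh])
  rcases Nat.eq_zero_or_pos Q.natDegree with hd | hd
  · have h0 := h 0
    rw [eq_C_of_natDegree_eq_zero hd] at h0 ⊢
    simp only [eval_C, leadingCoeff_C] at h0 ⊢
    exact mul_self_pos.mpr (by simpa using h0)
  · have hdeg : 0 < Q.degree := natDegree_pos_iff_degree_pos.mp hd
    rcases (leadingCoeff_ne_zero.mpr hQ0).lt_or_gt with hl | hl
    · have hdeg' : 0 < (-Q).degree := by rwa [degree_neg]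
      have hl' : 0 ≤ (-Q).leadingCoeff := by rw [leadingCoeff_neg]; linarith
      obtain ⟨b, hb⟩ := ((-Q).tendsto_atTop_of_leadingCoeff_nonneg hdeg' hl').eventually
        (Filter.eventually_ge_atTop 1) |>.exists
      have hQb : Q.eval b < 0 := by
        have : -Q.eval b ≥ 1 := by simpa using hb
        linarith
      have hQ00 : Q.eval 0 < 0 := eval_sign_const h hQb
      exact mul_pos_of_neg_of_neg hQ00 hl
    · obtain ⟨b, hb⟩ := (Q.tendsto_atTop_of_leadingCoeff_nonneg hdeg hl.le).eventually
        (Filter.eventually_ge_atTop 1) |>.exists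
      have hQb : 0 < Q.eval b := by linarith
      have hQ00 : 0 < Q.eval 0 := by
        rcases (h 0).lt_or_gt with h' | h'
        · exact absurd (eval_sign_const h h' (b := b)) (by linarith)
        · exact h'
      exact mul_pos hQ00 hl

private lemma parity_pos {P : ℝ[X]} (h0 : P.eval 0 ≠ 0) :
    (0 < P.eval 0 * P.leadingCoeff
      ↔ Even (P.roots.filter (fun x => 0 < x)).card) := by
  classical
  have hP : P ≠ 0 := fun h => h0 (by simp [h])
  obtain ⟨Q, hQ⟩ := prod_multiset_X_sub_C_dvd P
  set M : ℝ[X] := (P.roots.map fun a => X - C a).prod with hMdef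
  have hMmonic : M.Monic :=
    monic_multiset_prod_of_monic _ _ (fun a _ => monic_X_sub_C a)
  have hQ0 : Q ≠ 0 := fun h => hP (by rw [hQ, h, mul_zero])
  have hrootsQ : Q.roots = 0 := by
    have h1 : P.roots = M.roots + Q.roots := by
      conv_lhs => rw [hQ]
      exact roots_mul (hQ ▸ hP)
    rw [hMdef, roots_multiset_prod_X_sub_C] at h1
    exact (left_eq_add.mp h1)
  have hQx : ∀ x : ℝ, Q.eval x ≠ 0 := by
    intro x hx
    have : x ∈ Q.roots := (mem_roots hQ0).mpr hx
    rw [hrootsQ] at this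
    simp at this
  -- all roots are nonzero
  have hrne : ∀ r ∈ P.roots, r ≠ 0 := by
    intro r hr hr0
    subst hr0
    have := isRoot_of_mem_roots hr
    rw [IsRoot] at this
    exact h0 this
  have hevalM : M.eval 0 = (P.roots.map (fun a => -a)).prod := by
    rw [hMdef, eval_multiset_prod, Multiset.map_map]
    apply congrArg
    apply Multiset.map_congr rfl
    intro r _
    simp
  set F := P.roots.filter (fun x => 0 < x) with hF
  set G := P.roots.filter (fun x => ¬ 0 < x) with hG
  have hsplit : F + G = P.roots := Multiset.filter_add_not _ _
  have hprodsplit : (P.roots.map (fun a => -a)).prod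
      = ((-1 : ℝ) ^ F.card * F.prod) * (G.map (fun a => -a)).prod := by
    rw [← hsplit, Multiset.map_add, Multiset.prod_add]
    congr 1
    exact Multiset.prod_map_neg F
  have hFpos : 0 < F.prod := by
    apply Multiset.prod_pos
    intro x hx
    exact (Multiset.mem_filter.mp hx).2
  have hGpos : 0 < (G.map (fun a => -a)).prod := by
    apply Multiset.prod_pos
    intro x hx
    obtain ⟨a, ha, rfl⟩ := Multiset.mem_map.mp hx
    have h1 := (Multiset.mem_filter.mp ha).2
    have h2 := hrne a (Multiset.mem_filter.mp ha).1
    have : a < 0 := by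
      rcases lt_trichotomy a 0 with h | h | h
      · exact h
      · exact absurd h h2
      · exact absurd h h1
    linarith
  have hA : 0 < Q.eval 0 * Q.leadingCoeff := eval_zero_mul_leading_pos hQx
  have hlead : P.leadingCoeff = Q.leadingCoeff := by
    rw [hQ, leadingCoeff_mul, hMmonic.leadingCoeff, one_mul]
  have heval : P.eval 0 = M.eval 0 * Q.eval 0 := by rw [hQ, eval_mul]
  have heq : P.eval 0 * P.leadingCoeff
      = (-1 : ℝ) ^ F.card * ((F.prod * (G.map (fun a => -a)).prod)
          * (Q.eval 0 * Q.leadingCoeff)) := by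
    rw [heval, hlead, hevalM, hprodsplit]
    ring
  set K := F.prod * (G.map (fun a => -a)).prod with hK
  have hKpos : 0 < K := mul_pos hFpos hGpos
  rcases Nat.even_or_odd F.card with he | ho
  · rw [heq, he.neg_one_pow, one_mul]
    exact iff_of_true (mul_pos hKpos hA) he
  · rw [heq, ho.neg_one_pow]
    constructor
    · intro hh; nlinarith
    · intro hh; exact absurd hh (Nat.not_even_iff_odd.mpr ho)

private lemma sign_helper1 {u v w : ℝ} (hu : u ≠ 0) (hv : v ≠ 0) (hw : w ≠ 0)
    (hvw : w * v < 0) : (0 < u * w ↔ ¬ 0 < u * v) := by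
  rcases hu.lt_or_gt with hu' | hu' <;> rcases hv.lt_or_gt with hv' | hv' <;>
    rcases hw.lt_or_gt with hw' | hw' <;>
    constructor <;> intro h <;> first
      | (intro h2; nlinarith)
      | nlinarith
      | (push_neg at h; nlinarith)

private lemma sign_helper2 {u v w : ℝ} (hu : u ≠ 0) (hv : v ≠ 0) (hw : w ≠ 0)
    (hvw : ¬ w * v < 0) : (0 < u * w ↔ 0 < u * v) := by
  rcases hu.lt_or_gt with hu' | hu' <;> rcases hv.lt_or_gt with hv' | hv' <;>
    rcases hw.lt_or_gt with hw' | hw' <;>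
    constructor <;> intro h <;> first
      | nlinarith
      | (exfalso; apply hvw; nlinarith)

private lemma parity_signchanges (a : ℕ → ℝ) :
    ∀ d : ℕ, (∀ j ≤ d, a j ≠ 0) →
      (0 < a 0 * a d ↔
        Even ((Finset.Icc 1 d).filter (fun j => a j * a (j - 1) < 0)).card) := by
  intro d
  induction d with
  | zero =>
    intro h
    rw [show Finset.Icc 1 0 = (∅ : Finset ℕ) from Finset.Icc_eq_empty (by omega)]
    simp only [Finset.filter_empty, Finset.card_empty]
    exact iff_of_true (mul_self_pos.mpr (h 0 le_rfl)) Even.zero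
  | succ d ih =>
    intro h
    have ih' := ih (fun j hj => h j (by omega))
    have hicc : Finset.Icc 1 (d + 1) = insert (d + 1) (Finset.Icc 1 d) := by
      ext j
      simp only [Finset.mem_Icc, Finset.mem_insert]
      omega
    have hnm : (d + 1) ∉ Finset.Icc 1 d := by simp
    have h0 : a 0 ≠ 0 := h 0 (by omega)
    have hd : a d ≠ 0 := h d (by omega)
    have hd1 : a (d + 1) ≠ 0 := h (d + 1) le_rfl
    rw [hicc, Finset.filter_insert]
    by_cases hp : a (d + 1) * a (d + 1 - 1) < 0
    · rw [if_pos hp, Finset.card_insert_of_notMem (fun hm => hnm (Finset.mem_filter.mp hm).1)]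
      rw [Nat.even_add_one, ← ih']
      simp only [Nat.add_sub_cancel] at hp
      exact sign_helper1 h0 hd hd1 hp
    · rw [if_neg hp]
      rw [← ih']
      simp only [Nat.add_sub_cancel] at hp
      exact sign_helper2 h0 hd hd1 hp

private lemma signchanges_deriv_le {P : ℝ[X]} {d : ℕ} (h : ∀ j ≤ d + 1, P.coeff j ≠ 0) :
    ((Finset.Icc 1 d).filter
        (fun j => (derivative P).coeff j * (derivative P).coeff (j - 1) < 0)).card
      ≤ ((Finset.Icc 1 (d + 1)).filter
        (fun j => P.coeff j * P.coeff (j - 1) < 0)).card := by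
  apply Finset.card_le_card_of_injOn (fun j => j + 1)
  · intro j hj
    simp only [Finset.mem_coe, Finset.mem_filter, Finset.mem_Icc] at hj ⊢
    obtain ⟨⟨hj1, hj2⟩, hsign⟩ := hj
    refine ⟨⟨by omega, by omega⟩, ?_⟩
    rw [coeff_derivative, coeff_derivative] at hsign
    rw [show j - 1 + 1 = j by omega] at hsign
    rw [show j + 1 - 1 = j from rfl]
    have c1 : (0 : ℝ) < (j : ℝ) + 1 := by positivity
    have c2 : (0 : ℝ) < ((j - 1 : ℕ) : ℝ) + 1 := by positivity
    nlinarith [mul_pos c1 c2]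
  · intro x _ y _ hxy
    exact add_right_cancel hxy

private lemma descartes_ineq :
    ∀ (d : ℕ) (P : ℝ[X]), P.natDegree = d → (∀ j ≤ d, P.coeff j ≠ 0) →
      (P.roots.filter (fun x => 0 < x)).card
        ≤ ((Finset.Icc 1 d).filter (fun j => P.coeff j * P.coeff (j - 1) < 0)).card := by
  intro d
  induction d with
  | zero =>
    intro P hdeg h
    obtain ⟨x, rfl⟩ := natDegree_eq_zero.mp hdeg
    simp
  | succ d ih =>
    intro P hdeg h
    have h0 : P.coeff 0 ≠ 0 := h 0 (Nat.zero_le _)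
    have h1 : P.coeff 1 ≠ 0 := h 1 (by omega)
    have hP : P ≠ 0 := fun hh => h0 (by simp [hh])
    have hcoeffD : ∀ j ≤ d, (derivative P).coeff j ≠ 0 := by
      intro j hj
      rw [coeff_derivative]
      exact mul_ne_zero (h (j + 1) (by omega)) (by positivity)
    have hDdeg : (derivative P).natDegree = d := by
      apply le_antisymm
      · have := natDegree_derivative_le P
        omega
      · exact le_natDegree_of_ne_zero (hcoeffD d le_rfl)
    have hle1 := pos_roots_le_derivative h0 h1
    have hle2 := ih (derivative P) hDdeg hcoeffD
    have hle3 := signchanges_deriv_le h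
    -- parity of pos vs sign changes
    have heval0 : P.eval 0 ≠ 0 := by rwa [← coeff_zero_eq_eval_zero]
    have hpar1 := parity_pos heval0
    have hpar2 := parity_signchanges P.coeff (d + 1) h
    rw [← coeff_zero_eq_eval_zero, ← coeff_natDegree, hdeg] at hpar1
    have hpar : Even ((P.roots.filter (fun x => 0 < x)).card)
        ↔ Even (((Finset.Icc 1 (d + 1)).filter
            (fun j => P.coeff j * P.coeff (j - 1) < 0)).card) :=
      (hpar1.symm.trans hpar2)
    rw [Nat.even_iff, Nat.even_iff] at hpar
    omega

/-- Descartes' rule of signs (with Fourier's completion) for positive roots: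
for a real polynomial of degree `d` with all coefficients nonzero, the number `pos`
of positive roots counted with multiplicity satisfies `pos ≤ c` and `c - pos` is even,
where `c` is the number of sign changes in the sequence of coefficients. -/
theorem descartes_positive_roots (d : ℕ) (P : Polynomial ℝ)
    (hdeg : P.natDegree = d)
    (hnz : ∀ j ≤ d, P.coeff j ≠ 0)
    (c pos : ℕ)
    (hc : c = ((Finset.Icc 1 d).filter
      (fun j => P.coeff j * P.coeff (j - 1) < 0)).card)
    (hpos : pos = (P.roots.filter (fun x => 0 < x)).card) :
    pos ≤ c ∧ Even (c - pos) := by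
  have h0 : P.coeff 0 ≠ 0 := hnz 0 (Nat.zero_le _)
  have heval0 : P.eval 0 ≠ 0 := by rwa [← coeff_zero_eq_eval_zero]
  have hineq : pos ≤ c := by
    rw [hc, hpos]
    exact descartes_ineq d P hdeg hnz
  refine ⟨hineq, ?_⟩
  have hpar1 := parity_pos heval0
  have hpar2 := parity_signchanges P.coeff d hnz
  rw [← coeff_zero_eq_eval_zero, ← coeff_natDegree, hdeg] at hpar1
  rw [Nat.even_sub hineq, hc, hpos]
  exact hpar2.symm.trans hpar1
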